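/- For any copula C, the Spearman correlation ρ(C) = 12∫₀¹∫₀¹ C(x,y) dx dy − 3 and Kendall tau τ(C) = 4∫∫_{[0,1]²} C(x,y) dC(x,y) − 1 of the partial copula obtained as mixture C = ∫ C_z f(z) dz of a family with D(C_z) ≤ k for all z satisfy the relation ρ/3 − k ≤ τ ≤ ρ/3 + k, where D(C') = 4 sup |C'(x,y) − xy|. -/

import Mathlib

open MeasureTheory ProbabilityTheory Set

/-- Kolmogorov distance dependence of a bivariate function on the unit square. -/
noncomputable def KDD (C : ℝ → ℝ → ℝ) : ℝ :=
  4 * ⨆ p : Icc (0:ℝ) 1 × Icc (0:ℝ) 1, |C p.1 p.2 - (p.1 : ℝ) * (p.2 : ℝ)|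

/-- For the mixture copula `C = ∫ C_z f(z) dz` of a family with `D(C_z) ≤ k` for all `z`,
Kendall's tau `τ(C) = 4 E[C(U,V)] - 1` and Spearman's rho `ρ(C) = 12 E[UV] - 3`
(where `(U,V)` has joint CDF `C`) satisfy `ρ/3 - k ≤ τ ≤ ρ/3 + k`. -/
theorem kendall_spearman_relation_mixture
    {Ω : Type*} [MeasureSpace Ω] [IsProbabilityMeasure (ℙ : Measure Ω)]
    (Cz : ℝ → ℝ → ℝ → ℝ)  -- the family of copulas (C_z)
    (fz : ℝ → ℝ)           -- probability density on ℝ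
    (hf0 : ∀ z, 0 ≤ fz z) (hfi : Integrable fz) (hf1 : ∫ z, fz z = 1)
    (hCbd : ∀ z, ∀ x ∈ Icc (0:ℝ) 1, ∀ y ∈ Icc (0:ℝ) 1, Cz z x y ∈ Icc (0:ℝ) 1)
    (hCmeas : ∀ x ∈ Icc (0:ℝ) 1, ∀ y ∈ Icc (0:ℝ) 1, Measurable fun z => Cz z x y)
    (k : ℝ) (hk : ∀ z, KDD (Cz z) ≤ k)
    (U V : Ω → ℝ) (hU : Measurable U) (hV : Measurable V)
    -- (U,V) has joint CDF equal to the mixture copula: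
    (hUV : ∀ x ∈ Icc (0:ℝ) 1, ∀ y ∈ Icc (0:ℝ) 1,
      (ℙ {ω | U ω ≤ x ∧ V ω ≤ y}).toReal = ∫ z, Cz z x y * fz z)
    (hUuni : (ℙ : Measure Ω).map U = volume.restrict (Icc (0:ℝ) 1))
    (hVuni : (ℙ : Measure Ω).map V = volume.restrict (Icc (0:ℝ) 1)) :
    (12 * (∫ ω, U ω * V ω) - 3) / 3 - k
        ≤ 4 * (∫ ω, (∫ z, Cz z (U ω) (V ω) * fz z)) - 1
    ∧ 4 * (∫ ω, (∫ z, Cz z (U ω) (V ω) * fz z)) - 1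
        ≤ (12 * (∫ ω, U ω * V ω) - 3) / 3 + k := by
  -- notation
  set g : ℝ → ℝ → ℝ := fun x y => ∫ z, Cz z x y * fz z with hg
  -- pointwise bound from KDD
  have hk4 : ∀ z, ∀ x ∈ Icc (0:ℝ) 1, ∀ y ∈ Icc (0:ℝ) 1, |Cz z x y - x * y| ≤ k / 4 := by
    intro z x hx y hy
    have hbdd : BddAbove (range fun p : Icc (0:ℝ) 1 × Icc (0:ℝ) 1 =>
        |Cz z p.1 p.2 - (p.1 : ℝ) * (p.2 : ℝ)|) := by
      refine ⟨1, ?_⟩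
      rintro _ ⟨p, rfl⟩
      have h1 := hCbd z p.1 p.1.2 p.2 p.2.2
      have h2a : (0:ℝ) ≤ (p.1 : ℝ) * (p.2 : ℝ) := mul_nonneg p.1.2.1 p.2.2.1
      have h2b : (p.1 : ℝ) * (p.2 : ℝ) ≤ 1 := by nlinarith [p.1.2.1, p.1.2.2, p.2.2.1, p.2.2.2]
      rw [abs_le]
      constructor <;> nlinarith [h1.1, h1.2]
    have hle : |Cz z x y - x * y| ≤
        ⨆ p : Icc (0:ℝ) 1 × Icc (0:ℝ) 1, |Cz z p.1 p.2 - (p.1 : ℝ) * (p.2 : ℝ)| :=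
      le_ciSup hbdd (⟨⟨x, hx⟩, ⟨y, hy⟩⟩ : Icc (0:ℝ) 1 × Icc (0:ℝ) 1)
    have hkz := hk z
    unfold KDD at hkz
    linarith
  -- integrability in z
  have hint : ∀ x ∈ Icc (0:ℝ) 1, ∀ y ∈ Icc (0:ℝ) 1,
      Integrable fun z => Cz z x y * fz z := by
    intro x hx y hy
    refine hfi.mono' ((hCmeas x hx y hy).aestronglyMeasurable.mul hfi.1) ?_
    refine Filter.Eventually.of_forall fun z => ?_
    have h1 := hCbd z x hx y hy
    rw [Real.norm_eq_abs, abs_mul, abs_of_nonneg h1.1, abs_of_nonneg (hf0 z)]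
    nlinarith [hf0 z, h1.1, h1.2]
  -- bound on g
  have gbound : ∀ x ∈ Icc (0:ℝ) 1, ∀ y ∈ Icc (0:ℝ) 1, |g x y - x * y| ≤ k / 4 := by
    intro x hx y hy
    have hd : Integrable fun z => (Cz z x y - x * y) * fz z := by
      have := (hint x hx y hy).sub (hfi.const_mul (x * y))
      simpa [sub_mul, Pi.sub_def] using this
    have heq : ∫ z, (Cz z x y - x * y) * fz z = g x y - x * y := by
      simp only [sub_mul]
      rw [integral_sub (hint x hx y hy) (hfi.const_mul (x * y)), integral_const_mul, hf1,
        mul_one, hg]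
    calc |g x y - x * y| = |∫ z, (Cz z x y - x * y) * fz z| := by rw [heq]
      _ ≤ ∫ z, |(Cz z x y - x * y) * fz z| := by
          simpa only [Real.norm_eq_abs] using norm_integral_le_integral_norm fun z => (Cz z x y - x * y) * fz z
      _ ≤ ∫ z, (k / 4) * fz z := by
          refine integral_mono hd.abs (hfi.const_mul _) fun z => ?_
          rw [abs_mul, abs_of_nonneg (hf0 z)]
          exact mul_le_mul_of_nonneg_right (hk4 z x hx y hy) (hf0 z)
      _ = k / 4 := by rw [integral_const_mul, hf1, mul_one]
  -- a.e. membership in [0,1]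
  have haeU : ∀ᵐ ω, U ω ∈ Icc (0:ℝ) 1 := by
    rw [ae_iff]
    have : {ω | ¬ U ω ∈ Icc (0:ℝ) 1} = U ⁻¹' (Icc (0:ℝ) 1)ᶜ := rfl
    rw [this, ← Measure.map_apply hU measurableSet_Icc.compl, hUuni,
      Measure.restrict_apply measurableSet_Icc.compl]
    simp
  have haeV : ∀ᵐ ω, V ω ∈ Icc (0:ℝ) 1 := by
    rw [ae_iff]
    have : {ω | ¬ V ω ∈ Icc (0:ℝ) 1} = V ⁻¹' (Icc (0:ℝ) 1)ᶜ := rfl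
    rw [this, ← Measure.map_apply hV measurableSet_Icc.compl, hVuni,
      Measure.restrict_apply measurableSet_Icc.compl]
    simp
  have hae : ∀ᵐ ω, U ω ∈ Icc (0:ℝ) 1 ∧ V ω ∈ Icc (0:ℝ) 1 := haeU.and haeV
  -- measurability of joint CDF
  have hS : MeasurableSet {q : (ℝ × ℝ) × Ω | U q.2 ≤ q.1.1 ∧ V q.2 ≤ q.1.2} :=
    (measurableSet_le (hU.comp measurable_snd) (measurable_fst.comp measurable_fst)).inter
      (measurableSet_le (hV.comp measurable_snd) (measurable_snd.comp measurable_fst))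
  have hF : Measurable fun p : ℝ × ℝ => ℙ {ω | U ω ≤ p.1 ∧ V ω ≤ p.2} := by
    have hm : Measurable fun q : (ℝ × ℝ) × Ω =>
        ({q : (ℝ × ℝ) × Ω | U q.2 ≤ q.1.1 ∧ V q.2 ≤ q.1.2}.indicator
          (fun _ => (1 : ENNReal)) q) := measurable_const.indicator hS
    have := Measurable.lintegral_prod_right' (ν := (ℙ : Measure Ω)) hm
    convert this using 1
    funext p
    have hsec : MeasurableSet {ω | U ω ≤ p.1 ∧ V ω ≤ p.2} :=
      (measurableSet_le hU measurable_const).inter (measurableSet_le hV measurable_const)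
    rw [← lintegral_indicator_one hsec]
    refine lintegral_congr fun ω => ?_
    by_cases h : U ω ≤ p.1 ∧ V ω ≤ p.2 <;>
      simp [Set.indicator_apply, Set.mem_setOf_eq, h]
  have hHmeas : Measurable fun ω => (ℙ {ω' | U ω' ≤ U ω ∧ V ω' ≤ V ω}).toReal :=
    (hF.comp (hU.prodMk hV)).ennreal_toReal
  -- a.e. equality with g (U ω) (V ω)
  have haeq : (fun ω => (ℙ {ω' | U ω' ≤ U ω ∧ V ω' ≤ V ω}).toReal)
      =ᵐ[ℙ] fun ω => g (U ω) (V ω) := by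
    filter_upwards [hae] with ω hω
    exact hUV _ hω.1 _ hω.2
  have hgm : AEStronglyMeasurable (fun ω => g (U ω) (V ω)) ℙ :=
    (hHmeas.aemeasurable.congr haeq).aestronglyMeasurable
  -- integrability
  have huvint : Integrable (fun ω => U ω * V ω) ℙ := by
    refine (integrable_const (1:ℝ)).mono' (hU.mul hV).aestronglyMeasurable ?_
    filter_upwards [hae] with ω hω
    rw [Real.norm_eq_abs, abs_mul, abs_of_nonneg hω.1.1, abs_of_nonneg hω.2.1]
    nlinarith [hω.1.1, hω.1.2, hω.2.1, hω.2.2]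
  have hgint : Integrable (fun ω => g (U ω) (V ω)) ℙ := by
    refine (integrable_const (1 + k / 4)).mono' hgm ?_
    filter_upwards [hae] with ω hω
    have h1 := gbound _ hω.1 _ hω.2
    have h2 : |U ω * V ω| ≤ 1 := by
      rw [abs_mul, abs_of_nonneg hω.1.1, abs_of_nonneg hω.2.1]
      nlinarith [hω.1.1, hω.1.2, hω.2.1, hω.2.2]
    rw [Real.norm_eq_abs]
    have h3 := abs_sub_abs_le_abs_sub (g (U ω) (V ω)) (U ω * V ω)
    linarith
  -- main estimate
  have hdiff : |(∫ ω, g (U ω) (V ω)) - ∫ ω, U ω * V ω| ≤ k / 4 := by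
    rw [← integral_sub hgint huvint]
    calc |∫ ω, (g (U ω) (V ω) - U ω * V ω)| ≤ ∫ ω, |g (U ω) (V ω) - U ω * V ω| := by
          simpa only [Real.norm_eq_abs] using
            norm_integral_le_integral_norm fun ω => g (U ω) (V ω) - U ω * V ω
      _ ≤ ∫ _ω : Ω, (k / 4) := by
          refine integral_mono_ae (hgint.sub huvint).abs (integrable_const _) ?_
          filter_upwards [hae] with ω hω
          exact gbound _ hω.1 _ hω.2
      _ = k / 4 := by simp
  rw [abs_le] at hdiff
  constructor <;> [linarith [hdiff.1]; linarith [hdiff.2]]
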